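/- Suppose |d_i| < 1 for all i = 1, …, N. Then there exists a unique continuous function g* : [a, b] → ℝ with g*(a) = y_0 and g*(b) = y_N such that Φg* = g*, where (Φg)(x) = p_i(u_i⁻¹(x)) + d_i · g(u_i⁻¹(x)) for x ∈ [x_{i−1}, x_i]. Moreover, g*(x_j) = y_j for every j = 0, 1, …, N. -/

import Mathlib

open Set

/-- Gluing lemma: a function continuous on two closed sets is continuous on their union. -/
lemma continuousOn_union_closed' {α β : Type*} [TopologicalSpace α] [TopologicalSpace β]
    {f : α → β} {s t : Set α} (hs : IsClosed s) (ht : IsClosed t)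
    (hfs : ContinuousOn f s) (hft : ContinuousOn f t) : ContinuousOn f (s ∪ t) := by
  intro z hz
  apply ContinuousWithinAt.union
  · by_cases h : z ∈ s
    · exact hfs z h
    · exact continuousWithinAt_of_notMem_closure (by rwa [hs.closure_eq])
  · by_cases h : z ∈ t
    · exact hft z h
    · exact continuousWithinAt_of_notMem_closure (by rwa [ht.closure_eq])

/-- If `|d_i| < 1` for all `i`, there is a unique continuous function `g*` on `[a, b]` with
`g* a = y₀`, `g* b = y_N` satisfying `Φ g* = g*` (i.e. the piecewise self-affine functional
equation), and `g*` passes through all interpolation points. -/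
theorem fractal_interpolation_function_exists_unique
    (a b : ℝ) (hab : a < b) (N : ℕ) (hN : 2 ≤ N)
    (x y : ℕ → ℝ) (hxa : x 0 = a) (hxb : x N = b)
    (hmono : ∀ j, j < N → x j < x (j + 1))
    (d : ℕ → ℝ) (hd : ∀ i, 1 ≤ i → i ≤ N → |d i| < 1) :
    let ai : ℕ → ℝ := fun i => (x i - x (i - 1)) / (b - a)
    let ci : ℕ → ℝ := fun i => (y i - y (i - 1) - d i * (y N - y 0)) / (b - a)
    let ei : ℕ → ℝ := fun i => (b * x (i - 1) - a * x i) / (b - a)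
    let fi : ℕ → ℝ := fun i => (b * y (i - 1) - a * y i - d i * (b * y 0 - a * y N)) / (b - a)
    let uinv : ℕ → ℝ → ℝ := fun i t => (t - ei i) / ai i
    let p : ℕ → ℝ → ℝ := fun i t => ci i * t + fi i
    ∃ gstar : ℝ → ℝ,
      (ContinuousOn gstar (Set.Icc a b) ∧ gstar a = y 0 ∧ gstar b = y N ∧
        ∀ i, 1 ≤ i → i ≤ N → ∀ t ∈ Set.Icc (x (i - 1)) (x i),
          gstar t = p i (uinv i t) + d i * gstar (uinv i t)) ∧
      (∀ h : ℝ → ℝ,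
        (ContinuousOn h (Set.Icc a b) ∧ h a = y 0 ∧ h b = y N ∧
          ∀ i, 1 ≤ i → i ≤ N → ∀ t ∈ Set.Icc (x (i - 1)) (x i),
            h t = p i (uinv i t) + d i * h (uinv i t)) →
        ∀ t ∈ Set.Icc a b, h t = gstar t) ∧
      ∀ j, j ≤ N → gstar (x j) = y j := by
  intro ai ci ei fi uinv p
  have hba : (0:ℝ) < b - a := sub_pos.2 hab
  have hba' : b - a ≠ 0 := ne_of_gt hba
  -- monotonicity of x
  have xstrict : ∀ j k : ℕ, j < k → k ≤ N → x j < x k := by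
    intro j k hjk hkN
    induction k with
    | zero => omega
    | succ m ih =>
      rcases Nat.lt_succ_iff_lt_or_eq.mp hjk with h | h
      · exact lt_trans (ih h (by omega)) (hmono m (by omega))
      · subst h; exact hmono j (by omega)
  have xmono : ∀ j k : ℕ, j ≤ k → k ≤ N → x j ≤ x k := by
    intro j k hjk hkN
    rcases eq_or_lt_of_le hjk with h | h
    · rw [h]
    · exact (xstrict j k h hkN).le
  have hxlt : ∀ i, 1 ≤ i → i ≤ N → x (i-1) < x i := fun i h1 h2 =>
    xstrict _ _ (by omega) h2
  have hsub : ∀ i, 1 ≤ i → i ≤ N → Icc (x (i-1)) (x i) ⊆ Icc a b := by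
    intro i h1 h2 t ht
    constructor
    · calc a = x 0 := hxa.symm
        _ ≤ x (i-1) := xmono 0 (i-1) (by omega) (by omega)
        _ ≤ t := ht.1
    · calc t ≤ x i := ht.2
        _ ≤ x N := xmono i N h2 le_rfl
        _ = b := hxb
  have hai : ∀ i, 1 ≤ i → i ≤ N → 0 < ai i := by
    intro i h1 h2
    exact div_pos (sub_pos.2 (hxlt i h1 h2)) hba
  have huinva : ∀ i, 1 ≤ i → i ≤ N → uinv i (x (i-1)) = a := by
    intro i h1 h2
    show (x (i-1) - ei i) / ai i = a
    rw [div_eq_iff (ne_of_gt (hai i h1 h2))]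
    show x (i-1) - (b * x (i-1) - a * x i)/(b-a) = a * ((x i - x (i-1))/(b-a))
    field_simp
    ring
  have huinvb : ∀ i, 1 ≤ i → i ≤ N → uinv i (x i) = b := by
    intro i h1 h2
    show (x i - ei i) / ai i = b
    rw [div_eq_iff (ne_of_gt (hai i h1 h2))]
    show x i - (b * x (i-1) - a * x i)/(b-a) = b * ((x i - x (i-1))/(b-a))
    field_simp
    ring
  have huinvmem : ∀ i, 1 ≤ i → i ≤ N → ∀ t ∈ Icc (x (i-1)) (x i), uinv i t ∈ Icc a b := by
    intro i h1 h2 t ht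
    have h0 := hai i h1 h2
    constructor
    · rw [← huinva i h1 h2]
      exact div_le_div_of_nonneg_right (by linarith [ht.1]) h0.le
    · rw [← huinvb i h1 h2]
      exact div_le_div_of_nonneg_right (by linarith [ht.2]) h0.le
  have claimA : ∀ i : ℕ, ci i * b + fi i + d i * y N = y i := by
    intro i
    show (y i - y (i-1) - d i * (y N - y 0))/(b-a) * b
        + (b * y (i-1) - a * y i - d i * (b * y 0 - a * y N))/(b-a) + d i * y N = y i
    field_simp
    ring
  have claimB : ∀ i : ℕ, ci i * a + fi i + d i * y 0 = y (i-1) := by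
    intro i
    show (y i - y (i-1) - d i * (y N - y 0))/(b-a) * a
        + (b * y (i-1) - a * y i - d i * (b * y 0 - a * y N))/(b-a) + d i * y 0 = y (i-1)
    field_simp
    ring
  -- the index of the piece containing t
  let Idx : ℝ → ℕ := fun t => ((Finset.range N).filter (fun k => x k ≤ t)).card
  have idx_spec : ∀ t ∈ Icc a b, 1 ≤ Idx t ∧ Idx t ≤ N ∧ x (Idx t - 1) ≤ t ∧ t ≤ x (Idx t)
      ∧ (Idx t < N → t < x (Idx t)) := by
    intro t ht
    set S := (Finset.range N).filter (fun k => x k ≤ t) with hS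
    have hdc : ∀ k ∈ S, ∀ j, j ≤ k → j ∈ S := by
      intro k hk j hj
      simp only [hS, Finset.mem_filter, Finset.mem_range] at hk ⊢
      exact ⟨lt_of_le_of_lt hj hk.1, le_trans (xmono j k hj (by omega)) hk.2⟩
    have h0S : 0 ∈ S := by
      simp only [hS, Finset.mem_filter, Finset.mem_range]
      exact ⟨by omega, by rw [hxa]; exact ht.1⟩
    have h1 : 1 ≤ S.card := Finset.card_pos.2 ⟨0, h0S⟩
    have hN' : S.card ≤ N := le_trans (Finset.card_le_card (Finset.filter_subset _ _)) (by simp)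
    have hx1 : x (S.card - 1) ≤ t := by
      by_contra hcon
      push_neg at hcon
      have hnot : S.card - 1 ∉ S := by
        simp only [hS, Finset.mem_filter, Finset.mem_range]
        intro hmem
        exact absurd hmem.2 (not_le.2 hcon)
      have hsub2 : S ⊆ Finset.range (S.card - 1) := by
        intro k hk
        simp only [Finset.mem_range]
        by_contra hk2
        push_neg at hk2
        exact hnot (hdc k hk _ hk2)
      have := Finset.card_le_card hsub2
      simp only [Finset.card_range] at this
      omega
    have hnotin : S.card ∉ S := by
      intro hin
      have hsub3 : Finset.range (S.card + 1) ⊆ S := by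
        intro j hj
        simp only [Finset.mem_range, Nat.lt_succ_iff] at hj
        exact hdc _ hin _ hj
      have := Finset.card_le_card hsub3
      simp only [Finset.card_range] at this
      omega
    have hx2 : t ≤ x S.card ∧ (S.card < N → t < x S.card) := by
      rcases eq_or_lt_of_le hN' with hEq | hLt
      · rw [hEq, hxb]; exact ⟨ht.2, by omega⟩
      · have hnle : ¬ (x S.card ≤ t) := by
          intro hle
          exact hnotin (by simp only [hS, Finset.mem_filter, Finset.mem_range]; exact ⟨hLt, hle⟩)
        push_neg at hnle
        exact ⟨hnle.le, fun _ => hnle⟩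
    exact ⟨h1, hN', hx1, hx2.1, hx2.2⟩
  have idx_cases : ∀ i, 1 ≤ i → i ≤ N → ∀ t ∈ Icc (x (i-1)) (x i),
      Idx t = i ∨ (Idx t = i + 1 ∧ t = x i ∧ i + 1 ≤ N) := by
    intro i h1 h2 t ht
    have htab := hsub i h1 h2 ht
    obtain ⟨hI1, hIN, hIl, hIr, hIs⟩ := idx_spec t htab
    rcases lt_trichotomy (Idx t) i with hlt | heq | hgt
    · exfalso
      have hIltN : Idx t < N := lt_of_lt_of_le hlt h2
      have hs1 : t < x (Idx t) := hIs hIltN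
      have hs2 : x (Idx t) ≤ x (i-1) := xmono _ _ (by omega) (by omega)
      linarith [ht.1]
    · exact Or.inl heq
    · right
      have hle : x (Idx t - 1) ≤ x i := le_trans hIl ht.2
      have heq1 : Idx t - 1 = i := by
        by_contra hne
        have hlt2 : i < Idx t - 1 := by omega
        exact absurd (xstrict i (Idx t - 1) hlt2 (by omega)) (not_lt.2 hle)
      have hIl' : x i ≤ t := by rw [← heq1]; exact hIl
      exact ⟨by omega, le_antisymm ht.2 hIl', by omega⟩
  -- the ambient space
  have haI : a ∈ Icc a b := left_mem_Icc.2 hab.le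
  have hbI : b ∈ Icc a b := right_mem_Icc.2 hab.le
  haveI : CompactSpace ↥(Icc a b) := isCompact_iff_compactSpace.mp isCompact_Icc
  let A : ↥(Icc a b) := ⟨a, haI⟩
  let B : ↥(Icc a b) := ⟨b, hbI⟩
  let X := {f : C(↥(Icc a b), ℝ) // f A = y 0 ∧ f B = y N}
  have hclosed : IsClosed {f : C(↥(Icc a b), ℝ) | f A = y 0 ∧ f B = y N} := by
    have : {f : C(↥(Icc a b), ℝ) | f A = y 0 ∧ f B = y N}
        = {f : C(↥(Icc a b), ℝ) | f A = y 0} ∩ {f : C(↥(Icc a b), ℝ) | f B = y N} := rfl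
    rw [this]
    exact (isClosed_eq (continuous_eval_const A) continuous_const).inter
      (isClosed_eq (continuous_eval_const B) continuous_const)
  haveI : CompleteSpace X := hclosed.completeSpace_coe
  haveI : Nonempty X := by
    refine ⟨⟨⟨fun s => y 0 + (y N - y 0) * ((s:ℝ) - a)/(b-a), by fun_prop⟩, ?_, ?_⟩⟩
    · show y 0 + (y N - y 0) * (a - a)/(b-a) = y 0
      simp
    · show y 0 + (y N - y 0) * (b - a)/(b-a) = y N
      field_simp
      ring
  have fAval : ∀ f : X, ∀ hm : a ∈ Icc a b, f.1 ⟨a, hm⟩ = y 0 := fun f _ => f.2.1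
  have fBval : ∀ f : X, ∀ hm : b ∈ Icc a b, f.1 ⟨b, hm⟩ = y N := fun f _ => f.2.2
  -- the transfer operator, as a bare function on ℝ
  let G : X → ℝ → ℝ := fun f t =>
    p (Idx t) (uinv (Idx t) t) + d (Idx t) * f.1 (projIcc a b hab.le (uinv (Idx t) t))
  have key : ∀ f : X, ∀ i, 1 ≤ i → i ≤ N → ∀ t ∈ Icc (x (i-1)) (x i),
      G f t = p i (uinv i t) + d i * f.1 (projIcc a b hab.le (uinv i t)) := by
    intro f i h1 h2 t ht
    rcases idx_cases i h1 h2 t ht with hI | ⟨hI, htx, hiN⟩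
    · simp only [G, hI]
    · subst htx
      have e1 : uinv (i+1) (x i) = a := by
        have := huinva (i+1) (by omega) hiN
        simpa using this
      have e2 : uinv i (x i) = b := huinvb i h1 h2
      simp only [G, hI, e1, e2, projIcc_left, projIcc_right]
      rw [fAval f, fBval f]
      have hA := claimA i
      have hB := claimB (i+1)
      simp only [Nat.add_sub_cancel] at hB
      show ci (i+1) * a + fi (i+1) + d (i+1) * y 0 = ci i * b + fi i + d i * y N
      linarith
  have hcont_piece : ∀ f : X, ∀ i,
      Continuous (fun t : ℝ => p i (uinv i t) + d i * f.1 (projIcc a b hab.le (uinv i t))) := by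
    intro f i
    have hu : Continuous (uinv i) := by
      show Continuous fun t : ℝ => (t - ei i) / ai i
      fun_prop
    have h2 : Continuous (fun t : ℝ => f.1 (projIcc a b hab.le (uinv i t))) :=
      f.1.continuous.comp (continuous_projIcc.comp hu)
    have h3 : Continuous (fun t : ℝ => p i (uinv i t)) := by
      show Continuous fun t : ℝ => ci i * uinv i t + fi i
      exact (continuous_const.mul hu).add continuous_const
    exact h3.add (continuous_const.mul h2)
  have Gcont : ∀ f : X, ContinuousOn (G f) (Icc a b) := by
    intro f
    have main : ∀ n, 1 ≤ n → n ≤ N → ContinuousOn (G f) (Icc a (x n)) := by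
      intro n h1 hn
      induction n with
      | zero => omega
      | succ m ih =>
        have hpiece : ContinuousOn (G f) (Icc (x m) (x (m+1))) := by
          apply ContinuousOn.congr ((hcont_piece f (m+1)).continuousOn)
          intro t ht
          have hm : t ∈ Icc (x ((m+1)-1)) (x (m+1)) := by simpa using ht
          exact key f (m+1) (by omega) (by omega) t hm
        rcases Nat.eq_zero_or_pos m with hm0 | hm0
        · subst hm0
          rw [← hxa]
          exact hpiece
        · have hone : ContinuousOn (G f) (Icc a (x m)) := ih hm0 (by omega)
          have hun : Icc a (x m) ∪ Icc (x m) (x (m+1)) = Icc a (x (m+1)) :=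
            Icc_union_Icc_eq_Icc
              (by rw [← hxa]; exact xmono 0 m (by omega) (by omega))
              (xmono m (m+1) (by omega) (by omega))
          rw [← hun]
          exact continuousOn_union_closed' isClosed_Icc isClosed_Icc hone hpiece
    have := main N (by omega) le_rfl
    rwa [hxb] at this
  have GA : ∀ f : X, G f a = y 0 := by
    intro f
    have hmem : a ∈ Icc (x (1-1)) (x 1) := by
      simp only [Nat.sub_self]
      exact ⟨hxa.le, by rw [← hxa]; exact (xstrict 0 1 one_pos (by omega)).le⟩
    rw [key f 1 le_rfl (by omega) a hmem]
    have e1 := huinva 1 le_rfl (by omega)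
    simp only [Nat.sub_self, hxa] at e1
    rw [e1, projIcc_left, fAval f]
    have hB := claimB 1
    simp only [Nat.sub_self] at hB
    show ci 1 * a + fi 1 + d 1 * y 0 = y 0
    linarith
  have GB : ∀ f : X, G f b = y N := by
    intro f
    have hmem : b ∈ Icc (x (N-1)) (x N) := by
      constructor
      · rw [← hxb]; exact xmono (N-1) N (by omega) le_rfl
      · rw [hxb]
    rw [key f N (by omega) le_rfl b hmem]
    have e2 := huinvb N (by omega) le_rfl
    rw [hxb] at e2
    rw [e2, projIcc_right, fBval f]
    have hA := claimA N
    show ci N * b + fi N + d N * y N = y N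
    linarith
  let T : X → X := fun f => ⟨⟨fun s => G f s.1, (Gcont f).restrict⟩, GA f, GB f⟩
  -- contraction
  let K : NNReal := (Finset.Icc 1 N).sup fun i => ⟨|d i|, abs_nonneg _⟩
  have hKd : ∀ i, 1 ≤ i → i ≤ N → |d i| ≤ (K : ℝ) := by
    intro i h1 h2
    have := Finset.le_sup (f := fun i => (⟨|d i|, abs_nonneg _⟩ : NNReal))
      (Finset.mem_Icc.2 ⟨h1, h2⟩)
    exact_mod_cast this
  have hK1 : K < 1 := by
    refine (Finset.sup_lt_iff (by norm_num : (⊥:NNReal) < 1)).2 fun i hi => ?_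
    rw [Finset.mem_Icc] at hi
    have := hd i hi.1 hi.2
    exact NNReal.coe_lt_coe.1 (by exact this)
  have hcontr : ContractingWith K T := by
    constructor
    · exact hK1
    · apply LipschitzWith.of_dist_le_mul
      intro f g
      rw [Subtype.dist_eq, Subtype.dist_eq f g]
      refine (ContinuousMap.dist_le (by positivity)).2 fun s => ?_
      show dist (G f s.1) (G g s.1) ≤ (K:ℝ) * dist f.1 g.1
      obtain ⟨h1, h2, _, _, _⟩ := idx_spec s.1 s.2
      have hdiff : G f s.1 - G g s.1
          = d (Idx s.1) * (f.1 (projIcc a b hab.le (uinv (Idx s.1) s.1))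
            - g.1 (projIcc a b hab.le (uinv (Idx s.1) s.1))) := by
        simp only [G]; ring
      rw [Real.dist_eq, hdiff, abs_mul]
      have h3 : |f.1 (projIcc a b hab.le (uinv (Idx s.1) s.1))
          - g.1 (projIcc a b hab.le (uinv (Idx s.1) s.1))| ≤ dist f.1 g.1 := by
        rw [← Real.dist_eq]
        exact ContinuousMap.dist_apply_le_dist _
      exact mul_le_mul (hKd _ h1 h2) h3 (abs_nonneg _) K.coe_nonneg
  let gfix : X := ContractingWith.fixedPoint T hcontr
  have hfix : T gfix = gfix := hcontr.fixedPoint_isFixedPt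
  let gstar : ℝ → ℝ := fun t => gfix.1 (projIcc a b hab.le t)
  have gstar_eq : ∀ t (ht : t ∈ Icc a b), gstar t = gfix.1 ⟨t, ht⟩ := by
    intro t ht
    simp only [gstar]
    rw [projIcc_of_mem hab.le ht]
  have gstar_G : ∀ t (ht : t ∈ Icc a b), gstar t = G gfix t := by
    intro t ht
    rw [gstar_eq t ht]
    conv_lhs => rw [← hfix]
    rfl
  refine ⟨gstar, ⟨?_, ?_, ?_, ?_⟩, ?_, ?_⟩
  · exact (gfix.1.continuous.comp continuous_projIcc).continuousOn
  · rw [gstar_eq a haI]; exact gfix.2.1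
  · rw [gstar_eq b hbI]; exact gfix.2.2
  · intro i h1 h2 t ht
    rw [gstar_G t (hsub i h1 h2 ht)]
    exact key gfix i h1 h2 t ht
  · rintro h ⟨hC, hA2, hB2, heq⟩ t ht
    let H : X := ⟨⟨fun s => h s.1, hC.restrict⟩, hA2, hB2⟩
    have hHfix : T H = H := by
      apply Subtype.ext
      apply ContinuousMap.ext
      intro s
      show G H s.1 = h s.1
      obtain ⟨h1, h2, hl, hr, _⟩ := idx_spec s.1 s.2
      have hmem : s.1 ∈ Icc (x (Idx s.1 - 1)) (x (Idx s.1)) := ⟨hl, hr⟩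
      have hw : uinv (Idx s.1) s.1 ∈ Icc a b := huinvmem _ h1 h2 s.1 hmem
      rw [heq (Idx s.1) h1 h2 s.1 hmem]
      simp only [G]
      rw [projIcc_of_mem _ hw]
      rfl
    have hHg : H = gfix := hcontr.fixedPoint_unique hHfix
    calc h t = H.1 ⟨t, ht⟩ := rfl
      _ = gfix.1 ⟨t, ht⟩ := by rw [hHg]
      _ = gstar t := (gstar_eq t ht).symm
  · intro j hj
    rcases Nat.eq_zero_or_pos j with h0 | h0
    · subst h0
      rw [hxa, gstar_eq a haI]
      exact gfix.2.1
    · have hmem : x j ∈ Icc (x (j-1)) (x j) := ⟨xmono _ _ (by omega) hj, le_rfl⟩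
      rw [gstar_G (x j) (hsub j h0 hj hmem), key gfix j h0 hj (x j) hmem,
        huinvb j h0 hj, projIcc_right, fBval gfix]
      have hA := claimA j
      show ci j * b + fi j + d j * y N = y j
      linarith
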